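/- arXiv:1901.02479 — 2 statements merged into one kernel-verified Lean document; each statement's English description precedes it below -/
import Mathlib

section
/- No row avoiding G contains two distinct solitary pairs: if c : Fin 4 → Fin 3 avoids G, and {(i₁, c i₁), (j₁, c j₁)} and {(i₂, c i₂), (j₂, c j₂)} are both solitary pairs (with i₁ ≠ j₁ and i₂ ≠ j₂), then these two pairs are equal as unordered pairs. -/
/-- The forbidden-edge graph `G` on vertex set `Fin 4 × Fin 3`. -/
def EdgeSet : Set (Sym2 (Fin 4 × Fin 3)) :=
  {s((0, 0), (1, 0)), s((2, 0), (3, 0)), s((0, 1), (2, 1)),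
   s((1, 1), (3, 1)), s((0, 2), (3, 2)), s((1, 2), (2, 2))}

/-- A row `c` avoids `G` if no pair of its entries forms an edge of `G`. -/
def Avoids (c : Fin 4 → Fin 3) : Prop :=
  ∀ i j : Fin 4, i ≠ j → s((i, c i), (j, c j)) ∉ EdgeSet

/-- The pair `{(i,a),(j,b)}` (with `i ≠ j`, `a ≠ b`) is solitary if it is disjoint
from every (in fact the unique) edge of `G` joining column `i` to column `j`. -/
def Solitary (i j : Fin 4) (a b : Fin 3) : Prop :=
  i ≠ j ∧ a ≠ b ∧ ∀ c d : Fin 3, s((i, c), (j, d)) ∈ EdgeSet → a ≠ c ∧ b ≠ d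

instance : DecidablePred (· ∈ EdgeSet) := fun s => by
  unfold EdgeSet
  simp only [Set.mem_insert_iff, Set.mem_singleton_iff]
  infer_instance

instance (c : Fin 4 → Fin 3) : Decidable (Avoids c) := by unfold Avoids; infer_instance

instance (i j : Fin 4) (a b : Fin 3) : Decidable (Solitary i j a b) := by
  unfold Solitary; infer_instance

lemma no_two_solitary_key : ∀ c : Fin 4 → Fin 3, Avoids c →
    ∀ i₁ j₁ i₂ j₂ : Fin 4, Solitary i₁ j₁ (c i₁) (c j₁) → Solitary i₂ j₂ (c i₂) (c j₂) →
    s((i₁, c i₁), (j₁, c j₁)) = s((i₂, c i₂), (j₂, c j₂)) := by decide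

theorem no_two_solitary_pairs_in_a_row (c : Fin 4 → Fin 3) (hc : Avoids c)
    (i₁ j₁ i₂ j₂ : Fin 4)
    (h₁ : Solitary i₁ j₁ (c i₁) (c j₁)) (h₂ : Solitary i₂ j₂ (c i₂) (c j₂)) :
    s((i₁, c i₁), (j₁, c j₁)) = s((i₂, c i₂), (j₂, c j₂)) := by
  exact no_two_solitary_key c hc i₁ j₁ i₂ j₂ h₁ h₂
end

section
/- The set of solitary pairs of G forms a single orbit under the action of the group generated by g₁ and g₂ on unordered pairs of vertices: every image of a solitary pair under an element of the group is a solitary pair, and for any two solitary pairs P and Q there exists σ in the group with σ(P) = Q (applying σ elementwise). -/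
/-- The set of solitary pairs, as unordered pairs of vertices. -/
def SolitaryPairs : Set (Sym2 (Fin 4 × Fin 3)) :=
  {p | ∃ (i j : Fin 4) (a b : Fin 3), p = s((i, a), (j, b)) ∧ Solitary i j a b}

/-- `g₁`: the product of the disjoint transpositions
`(0,0)↔(1,0)`, `(0,1)↔(1,2)`, `(0,2)↔(1,1)`, `(2,1)↔(2,2)`, `(3,1)↔(3,2)`;
it fixes `(2,0)` and `(3,0)`. -/
def g₁ : Equiv.Perm (Fin 4 × Fin 3) :=
  Equiv.swap (0, 0) (1, 0) * Equiv.swap (0, 1) (1, 2) * Equiv.swap (0, 2) (1, 1) *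
    Equiv.swap (2, 1) (2, 2) * Equiv.swap (3, 1) (3, 2)

/-- The 4-cycle `a → b → c → d → a`. -/
def cyc4 (a b c d : Fin 4 × Fin 3) : Equiv.Perm (Fin 4 × Fin 3) :=
  Equiv.swap a d * Equiv.swap a c * Equiv.swap a b

/-- `g₂`: the product of the disjoint 4-cycles
`(0,0)→(1,2)→(2,0)→(3,2)→(0,0)`, `(1,0)→(2,2)→(3,0)→(0,2)→(1,0)`,
`(0,1)→(1,1)→(2,1)→(3,1)→(0,1)`. -/
def g₂ : Equiv.Perm (Fin 4 × Fin 3) :=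
  cyc4 (0, 0) (1, 2) (2, 0) (3, 2) * cyc4 (1, 0) (2, 2) (3, 0) (0, 2) *
    cyc4 (0, 1) (1, 1) (2, 1) (3, 1)

instance (s : Sym2 (Fin 4 × Fin 3)) : Decidable (s ∈ EdgeSet) :=
  decidable_of_iff (s = s((0, 0), (1, 0)) ∨ s = s((2, 0), (3, 0)) ∨ s = s((0, 1), (2, 1)) ∨
    s = s((1, 1), (3, 1)) ∨ s = s((0, 2), (3, 2)) ∨ s = s((1, 2), (2, 2))) (by simp [EdgeSet])

lemma solitary_symm {i j : Fin 4} {a b : Fin 3} (h : Solitary i j a b) : Solitary j i b a := by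
  obtain ⟨h1, h2, h3⟩ := h
  refine ⟨h1.symm, h2.symm, fun c d hcd => ?_⟩
  have := h3 d c (by rwa [Sym2.eq_swap])
  exact ⟨this.2, this.1⟩

lemma mem_solitary_iff (x y : Fin 4 × Fin 3) :
    s(x, y) ∈ SolitaryPairs ↔ Solitary x.1 y.1 x.2 y.2 := by
  constructor
  · rintro ⟨i, j, a, b, heq, hs⟩
    rw [Sym2.eq_iff] at heq
    rcases heq with ⟨h1, h2⟩ | ⟨h1, h2⟩
    · rw [h1, h2]; exact hs
    · rw [h1, h2]; exact solitary_symm hs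
  · intro h; exact ⟨x.1, y.1, x.2, y.2, by simp, h⟩

lemma closed_g₁ : ∀ x y : Fin 4 × Fin 3,
    Solitary x.1 y.1 x.2 y.2 ↔ Solitary (g₁ x).1 (g₁ y).1 (g₁ x).2 (g₁ y).2 := by decide

lemma closed_g₂ : ∀ x y : Fin 4 × Fin 3,
    Solitary x.1 y.1 x.2 y.2 ↔ Solitary (g₂ x).1 (g₂ y).1 (g₂ x).2 (g₂ y).2 := by decide

lemma mem_iff_map_mem_of_gen {g : Equiv.Perm (Fin 4 × Fin 3)}
    (hg : ∀ x y : Fin 4 × Fin 3,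
      Solitary x.1 y.1 x.2 y.2 ↔ Solitary (g x).1 (g y).1 (g x).2 (g y).2) :
    ∀ p : Sym2 (Fin 4 × Fin 3), p ∈ SolitaryPairs ↔ Sym2.map g p ∈ SolitaryPairs := by
  intro p
  induction p using Sym2.ind with
  | _ x y => rw [Sym2.map_pair_eq, mem_solitary_iff, mem_solitary_iff]; exact hg x y

lemma mem_iff_map_mem :
    ∀ σ ∈ Subgroup.closure ({g₁, g₂} : Set (Equiv.Perm (Fin 4 × Fin 3))),
      ∀ p : Sym2 (Fin 4 × Fin 3), p ∈ SolitaryPairs ↔ Sym2.map σ p ∈ SolitaryPairs := by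
  intro σ hσ
  induction hσ using Subgroup.closure_induction with
  | mem x hx =>
    rcases hx with h | h
    · subst h; exact mem_iff_map_mem_of_gen closed_g₁
    · rw [Set.mem_singleton_iff] at h; subst h; exact mem_iff_map_mem_of_gen closed_g₂
  | one => intro p; simp
  | mul x y hx hy ihx ihy =>
    intro p
    have : Sym2.map (x * y) p = Sym2.map x (Sym2.map y p) := by
      rw [Sym2.map_map]; rfl
    rw [this, ← ihx, ← ihy]
  | inv x hx ih =>
    intro p
    have : Sym2.map x (Sym2.map (⇑(x⁻¹)) p) = p := by
      rw [Sym2.map_map]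
      have : (⇑x ∘ ⇑(x⁻¹)) = id := by
        funext v; simp
      rw [this, Sym2.map_id]; rfl
    conv_lhs => rw [← this]
    exact (ih (Sym2.map (⇑(x⁻¹)) p)).symm

lemma enum_sol : ∀ x y : Fin 4 × Fin 3, Solitary x.1 y.1 x.2 y.2 →
    s(x, y) = s(((0:Fin 4), (0:Fin 3)), ((2:Fin 4), (2:Fin 3))) ∨
    s(x, y) = s(((1:Fin 4), (0:Fin 3)), ((2:Fin 4), (1:Fin 3))) ∨
    s(x, y) = s(((1:Fin 4), (2:Fin 3)), ((3:Fin 4), (0:Fin 3))) ∨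
    s(x, y) = s(((2:Fin 4), (2:Fin 3)), ((3:Fin 4), (1:Fin 3))) ∨
    s(x, y) = s(((0:Fin 4), (1:Fin 3)), ((3:Fin 4), (0:Fin 3))) ∨
    s(x, y) = s(((0:Fin 4), (2:Fin 3)), ((2:Fin 4), (0:Fin 3))) ∨
    s(x, y) = s(((2:Fin 4), (1:Fin 3)), ((3:Fin 4), (2:Fin 3))) ∨
    s(x, y) = s(((0:Fin 4), (2:Fin 3)), ((1:Fin 4), (1:Fin 3))) ∨
    s(x, y) = s(((1:Fin 4), (1:Fin 3)), ((2:Fin 4), (0:Fin 3))) ∨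
    s(x, y) = s(((1:Fin 4), (0:Fin 3)), ((3:Fin 4), (2:Fin 3))) ∨
    s(x, y) = s(((0:Fin 4), (0:Fin 3)), ((3:Fin 4), (1:Fin 3))) ∨
    s(x, y) = s(((0:Fin 4), (1:Fin 3)), ((1:Fin 4), (2:Fin 3))) := by decide

/-- the base solitary pair -/
def basePair : Sym2 (Fin 4 × Fin 3) := s(((0:Fin 4), (0:Fin 3)), ((2:Fin 4), (2:Fin 3)))

lemma reach : ∀ p ∈ SolitaryPairs,
    ∃ σ ∈ Subgroup.closure ({g₁, g₂} : Set (Equiv.Perm (Fin 4 × Fin 3))),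
      Sym2.map σ basePair = p := by
  have h1 : g₁ ∈ Subgroup.closure ({g₁, g₂} : Set (Equiv.Perm (Fin 4 × Fin 3))) :=
    Subgroup.subset_closure (by simp)
  have h2 : g₂ ∈ Subgroup.closure ({g₁, g₂} : Set (Equiv.Perm (Fin 4 × Fin 3))) :=
    Subgroup.subset_closure (by simp)
  intro p hp
  induction p using Sym2.ind with
  | _ x y =>
    rw [mem_solitary_iff] at hp
    rcases enum_sol x y hp with h|h|h|h|h|h|h|h|h|h|h|h
    · exact ⟨1, one_mem _, by rw [h]; decide⟩
    · exact ⟨g₁, h1, by rw [h]; decide⟩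
    · exact ⟨g₂, h2, by rw [h]; decide⟩
    · exact ⟨g₂ * g₁, mul_mem h2 h1, by rw [h]; decide⟩
    · exact ⟨g₁ * g₂, mul_mem h1 h2, by rw [h]; decide⟩
    · exact ⟨g₂ * g₂, mul_mem h2 h2, by rw [h]; decide⟩
    · exact ⟨g₁ * g₂ * g₁, mul_mem (mul_mem h1 h2) h1, by rw [h]; decide⟩
    · exact ⟨g₂ * g₁ * g₂, mul_mem (mul_mem h2 h1) h2, by rw [h]; decide⟩
    · exact ⟨g₁ * g₂ * g₂, mul_mem (mul_mem h1 h2) h2, by rw [h]; decide⟩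
    · exact ⟨g₂ * g₂ * g₂, mul_mem (mul_mem h2 h2) h2, by rw [h]; decide⟩
    · exact ⟨g₂ * g₁ * g₂ * g₁, mul_mem (mul_mem (mul_mem h2 h1) h2) h1, by rw [h]; decide⟩
    · exact ⟨g₂ * g₂ * g₁ * g₂ * g₁,
        mul_mem (mul_mem (mul_mem (mul_mem h2 h2) h1) h2) h1, by rw [h]; decide⟩

theorem solitary_pairs_single_orbit :
    (∀ σ ∈ Subgroup.closure ({g₁, g₂} : Set (Equiv.Perm (Fin 4 × Fin 3))),
      ∀ p ∈ SolitaryPairs, Sym2.map σ p ∈ SolitaryPairs) ∧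
    (∀ p ∈ SolitaryPairs, ∀ q ∈ SolitaryPairs,
      ∃ σ ∈ Subgroup.closure ({g₁, g₂} : Set (Equiv.Perm (Fin 4 × Fin 3))),
        Sym2.map σ p = q) := by
  constructor
  · intro σ hσ p hp
    exact (mem_iff_map_mem σ hσ p).mp hp
  · intro p hp q hq
    obtain ⟨σp, hσp, hσpe⟩ := reach p hp
    obtain ⟨σq, hσq, hσqe⟩ := reach q hq
    refine ⟨σq * σp⁻¹, mul_mem hσq (inv_mem hσp), ?_⟩
    have h1 : Sym2.map (⇑(σp⁻¹)) p = basePair := by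
      rw [← hσpe, Sym2.map_map]
      have : (⇑(σp⁻¹) ∘ ⇑σp) = id := by funext v; simp
      rw [this, Sym2.map_id]; rfl
    have h2 : Sym2.map (σq * σp⁻¹) p = Sym2.map σq (Sym2.map (⇑(σp⁻¹)) p) := by
      rw [Sym2.map_map]; rfl
    rw [h2, h1, hσqe]
end
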